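/- For every n ≥ 2, the number of permutations π ∈ S_n that avoid the generalized pattern 3-12 and satisfy π_n = n equals the Bell number B_{n-1}; and for every k with 1 ≤ k ≤ n-1, the number of permutations π ∈ S_n that avoid 3-12 and satisfy π_n = k equals ∇^{k-1}(B_{n-1}) = Σ_{i=0}^{k-1} (-1)^i · C(k-1, i) · B_{n-1-i}. -/

import Mathlib

/-- `π` avoids the generalized pattern 3-12. -/
def Avoids3d12 {n : ℕ} (π : Equiv.Perm (Fin n)) : Prop :=
  ¬ ∃ (i j : Fin n) (h : j.1 + 1 < n), i < j ∧ π j < π ⟨j.1 + 1, h⟩ ∧ π ⟨j.1 + 1, h⟩ < π i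

/-- The `m`-th Bell number: the number of partitions of a set with `m` elements,
equivalently the number of equivalence relations (setoids) on `Fin m`. -/
noncomputable def bell (m : ℕ) : ℕ := Nat.card (Setoid (Fin m))

open Finset Equiv

section Nabla


/-- iterated backward difference, closed form -/
def nabla (a : ℕ → ℤ) (c n : ℕ) : ℤ :=
  ∑ i ∈ range (c+1), (-1:ℤ)^i * (c.choose i) * a (n - i)

lemma nabla_zero (a : ℕ → ℤ) (n : ℕ) : nabla a 0 n = a n := by
  simp [nabla]

lemma nabla_succ (a : ℕ → ℤ) (c n : ℕ) (hn : 1 ≤ n) :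
    nabla a (c+1) n = nabla a c n - nabla a c (n-1) := by
  have e1 : nabla a (c+1) n
      = a n + ∑ i ∈ range (c+1), (-1:ℤ)^(i+1) * ((c+1).choose (i+1)) * a (n - (i+1)) := by
    rw [nabla, Finset.sum_range_succ']
    simp [add_comm]
  rw [e1]
  have e2 : ∀ i ∈ range (c+1), (-1:ℤ)^(i+1) * ((c+1).choose (i+1)) * a (n - (i+1))
      = -((-1:ℤ)^i * (c.choose i) * a ((n-1) - i)) + (-1:ℤ)^(i+1) * (c.choose (i+1)) * a (n - (i+1)) := by
    intro i _
    have : (n : ℕ) - (i+1) = (n-1) - i := by omega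
    rw [Nat.choose_succ_succ, this]
    push_cast
    ring
  rw [Finset.sum_congr rfl e2, Finset.sum_add_distrib]
  have e3 : ∑ i ∈ range (c+1), (-1:ℤ)^(i+1) * (c.choose (i+1)) * a (n - (i+1))
      = ∑ i ∈ range (c+2), (-1:ℤ)^i * (c.choose i) * a (n - i) - a n := by
    rw [Finset.sum_range_succ' (fun i => (-1:ℤ)^i * (c.choose i) * a (n - i)) (c+1)]
    simp
  have e4 : ∑ i ∈ range (c+2), (-1:ℤ)^i * (c.choose i) * a (n - i)
      = nabla a c n := by
    rw [nabla, Finset.sum_range_succ]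
    simp [Nat.choose_succ_self]
  rw [e3, e4, nabla, nabla]
  rw [Finset.sum_neg_distrib]
  ring
lemma choose_swap {m i j : ℕ} :
    (m.choose i : ℤ) * ((m-i).choose j) = (m.choose j) * ((m-j).choose i) := by
  rcases le_or_gt (i+j) m with h | h
  · have h1 : (m.choose (i+j)) * ((i+j).choose i) = (m.choose i) * ((m-i).choose j) := by
      have := Nat.choose_mul (n := m) (k := i+j) (s := i) (by omega)
      simpa [Nat.add_sub_cancel_left] using this
    have h2 : (m.choose (i+j)) * ((i+j).choose j) = (m.choose j) * ((m-j).choose i) := by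
      have := Nat.choose_mul (n := m) (k := i+j) (s := j) (by omega)
      have e : i + j - j = i := by omega
      simpa [e] using this
    have h3 : (i+j).choose i = (i+j).choose j := Nat.choose_symm_add
    have h4 : m.choose i * ((m-i).choose j) = m.choose j * ((m-j).choose i) := by
      rw [← h1, h3, h2]
    exact_mod_cast congrArg (Nat.cast : ℕ → ℤ) h4
  · rcases le_or_gt i m with hi | hi
    · rcases le_or_gt j m with hj | hj
      · rw [Nat.choose_eq_zero_of_lt (by omega : m - i < j),
            Nat.choose_eq_zero_of_lt (by omega : m - j < i)]
        push_cast; ring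
      · rw [Nat.choose_eq_zero_of_lt hj, Nat.choose_eq_zero_of_lt (by omega : m - i < j)]
        push_cast; ring
    · rw [Nat.choose_eq_zero_of_lt hi, Nat.choose_eq_zero_of_lt (by omega : m - j < i)]
      push_cast; ring

/-- binomial inversion of the Bell-type recurrence -/
lemma nabla_inversion (b : ℕ → ℤ)
    (hB : ∀ m, b (m+1) = ∑ j ∈ range (m+1), (m.choose j) * b j) (m : ℕ) :
    nabla b m (m+1) = b m := by
  have key : nabla b m (m+1)
      = ∑ i ∈ range (m+1), ∑ j ∈ range (m+1), (-1:ℤ)^i * (m.choose i) * ((m-i).choose j) * b j := by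
    rw [nabla]
    refine Finset.sum_congr rfl fun i hi => ?_
    rw [mem_range] at hi
    have e : m + 1 - i = (m - i) + 1 := by omega
    rw [e, hB (m - i), Finset.mul_sum]
    rw [← Finset.sum_subset (Finset.range_subset_range.2 (by omega : (m - i) + 1 ≤ m + 1))]
    · exact Finset.sum_congr rfl fun j _ => by ring
    · intro j hj hj'
      rw [mem_range] at hj hj'
      have hz : (m-i).choose j = 0 := Nat.choose_eq_zero_of_lt (by omega)
      rw [hz]
      push_cast
      ring
  rw [key, Finset.sum_comm]
  have inner : ∀ j ∈ range (m+1),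
      ∑ i ∈ range (m+1), (-1:ℤ)^i * (m.choose i) * ((m-i).choose j) * b j
      = (if j = m then b m else 0) := by
    intro j hj
    rw [mem_range] at hj
    have e1 : ∀ i ∈ range (m+1), (-1:ℤ)^i * (m.choose i) * ((m-i).choose j) * b j
        = ((m.choose j) * b j) * ((-1:ℤ)^i * ((m-j).choose i)) := by
      intro i _
      have := choose_swap (m := m) (i := i) (j := j)
      calc (-1:ℤ)^i * (m.choose i) * ((m-i).choose j) * b j
          = ((-1:ℤ)^i * b j) * ((m.choose i : ℤ) * ((m-i).choose j)) := by ring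
        _ = ((-1:ℤ)^i * b j) * ((m.choose j : ℤ) * ((m-j).choose i)) := by rw [this]
        _ = ((m.choose j) * b j) * ((-1:ℤ)^i * ((m-j).choose i)) := by ring
    rw [Finset.sum_congr rfl e1, ← Finset.mul_sum]
    have e2 : ∑ i ∈ range (m+1), (-1:ℤ)^i * ((m-j).choose i)
        = ∑ i ∈ range ((m-j)+1), (-1:ℤ)^i * ((m-j).choose i) := by
      rw [← Finset.sum_subset (Finset.range_subset_range.2 (by omega : (m-j)+1 ≤ m+1))]
      intro i hi hi'
      rw [mem_range] at hi hi'
      rw [Nat.choose_eq_zero_of_lt (by omega)]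
      ring
    rw [e2, Int.alternating_sum_range_choose]
    by_cases h : j = m
    · subst h; simp
    · rw [if_neg (by omega), if_neg h]; ring
  rw [Finset.sum_congr rfl inner, Finset.sum_ite_eq' (range (m+1)) m (fun _ => b m)]
  simp

lemma nabla_sum (b : ℕ → ℤ)
    (hB : ∀ m, b (m+1) = ∑ j ∈ range (m+1), (m.choose j) * b j) (m : ℕ) :
    ∀ t c, m - c = t → c ≤ m → nabla b c (m+1) = b m + ∑ j ∈ Ico c m, nabla b j m := by
  intro t
  induction t with
  | zero =>
    intro c ht hc
    have : c = m := by omega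
    subst this
    simp [nabla_inversion b hB]
  | succ t ih =>
    intro c ht hc
    have hlt : c < m := by omega
    have step : nabla b (c+1) (m+1) = nabla b c (m+1) - nabla b c m := by
      simpa using nabla_succ b c (m+1)
    have ihc : nabla b (c+1) (m+1) = b m + ∑ j ∈ Ico (c+1) m, nabla b j m :=
      ih (c+1) (by omega) (by omega)
    have esum : ∑ j ∈ Ico c m, nabla b j m
        = nabla b c m + ∑ j ∈ Ico (c+1) m, nabla b j m :=
      Finset.sum_eq_sum_Ico_succ_bot hlt _
    rw [esum]
    omega

end Nabla

section Bell
instance setoidFinite (α : Type*) [Finite α] : Finite (Setoid α) :=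
  Finite.of_injective (fun R : Setoid α => R.r)
    (fun a b h => Setoid.ext fun x y => iff_of_eq (congrFun (congrFun h x) y))

lemma bell_subsingleton {m : ℕ} (hm : m ≤ 1) : bell m = 1 := by
  have hsub : Subsingleton (Setoid (Fin m)) := by
    constructor
    intro R S
    refine Setoid.ext fun a b => ?_
    interval_cases m
    · exact isEmptyElim a
    · have : a = b := Subsingleton.elim a b
      subst this
      exact iff_of_true (R.refl a) (S.refl a)
  exact Nat.card_eq_one_iff_unique.2 ⟨hsub, ⟨⊥⟩⟩

section BellRec
variable {m : ℕ}

/-- membership of `a : Fin (m+1)` in the "distinguished block" `s ∪ {last}` -/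
def inS (s : Finset (Fin m)) (a : Fin (m+1)) : Prop :=
  a = Fin.last m ∨ ∃ x ∈ s, Fin.castSucc x = a

lemma not_inS {s : Finset (Fin m)} {x : Fin m} (hx : x ∉ s) : ¬ inS s x.castSucc := by
  rintro (h | ⟨y, hy, hxy⟩)
  · exact (Fin.castSucc_lt_last x).ne h
  · exact hx ((Fin.castSucc_injective m hxy) ▸ hy)

lemma inS_or {s : Finset (Fin m)} (a : Fin (m+1)) :
    inS s a ∨ ∃ x : Fin m, x ∉ s ∧ x.castSucc = a := by
  rcases eq_or_ne a (Fin.last m) with h | h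
  · exact Or.inl (Or.inl h)
  · obtain ⟨x, hx⟩ := Fin.exists_castSucc_eq.2 h
    by_cases hs : x ∈ s
    · exact Or.inl (Or.inr ⟨x, hs, hx⟩)
    · exact Or.inr ⟨x, hs, hx⟩

/-- extend a setoid on the complement of `s` to `Fin (m+1)` by adding the block `s ∪ {last}` -/
def extRel (s : Finset (Fin m)) (Q : Setoid {x : Fin m // x ∉ s}) : Setoid (Fin (m+1)) where
  r a b := (inS s a ∧ inS s b) ∨
    ∃ x y : {z : Fin m // z ∉ s}, x.1.castSucc = a ∧ y.1.castSucc = b ∧ Q x y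
  iseqv := by
    constructor
    · intro a
      rcases inS_or (s := s) a with h | ⟨x, hx, hxa⟩
      · exact Or.inl ⟨h, h⟩
      · exact Or.inr ⟨⟨x, hx⟩, ⟨x, hx⟩, hxa, hxa, Q.refl _⟩
    · rintro a b (⟨ha, hb⟩ | ⟨x, y, hxa, hyb, hq⟩)
      · exact Or.inl ⟨hb, ha⟩
      · exact Or.inr ⟨y, x, hyb, hxa, Q.symm hq⟩
    · rintro a b c (⟨ha, hb⟩ | ⟨x, y, hxa, hyb, hq⟩) (⟨hb', hc⟩ | ⟨x', y', hxb', hyc', hq'⟩)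
      · exact Or.inl ⟨ha, hc⟩
      · exact absurd (hxb' ▸ hb) (not_inS x'.2)
      · exact absurd (hyb ▸ hb') (not_inS y.2)
      · refine Or.inr ⟨x, y', hxa, hyc', Q.trans hq ?_⟩
        have : y = x' := Subtype.ext (Fin.castSucc_injective m (by rw [hxb', hyb]))
        rwa [this]

lemma extRel_iff (s : Finset (Fin m)) (Q : Setoid {x : Fin m // x ∉ s}) (a b : Fin (m+1)) :
    extRel s Q a b ↔ (inS s a ∧ inS s b) ∨
      ∃ x y : {z : Fin m // z ∉ s}, x.1.castSucc = a ∧ y.1.castSucc = b ∧ Q x y := Iff.rfl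

open Classical in
/-- the distinguished block (minus `last`) of a setoid on `Fin (m+1)` -/
noncomputable def sOf (R : Setoid (Fin (m+1))) : Finset (Fin m) :=
  univ.filter (fun x => R x.castSucc (Fin.last m))

lemma mem_sOf {R : Setoid (Fin (m+1))} {x : Fin m} :
    x ∈ sOf R ↔ R x.castSucc (Fin.last m) := by
  classical
  simp [sOf]

lemma inS_sOf_iff {R : Setoid (Fin (m+1))} {a : Fin (m+1)} :
    inS (sOf R) a ↔ R a (Fin.last m) := by
  constructor
  · rintro (h | ⟨x, hx, hxa⟩)
    · exact h ▸ R.refl _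
    · exact hxa ▸ mem_sOf.1 hx
  · intro h
    rcases inS_or (s := sOf R) a with h' | ⟨x, hx, hxa⟩
    · exact h'
    · exact absurd (mem_sOf.2 (hxa ▸ h)) hx

lemma sOf_extRel (s : Finset (Fin m)) (Q : Setoid {x : Fin m // x ∉ s}) :
    sOf (extRel s Q) = s := by
  ext x
  rw [mem_sOf, extRel_iff]
  constructor
  · rintro (⟨hx, _⟩ | ⟨x', y', hx', hy', _⟩)
    · rcases hx with h | ⟨z, hz, hzx⟩
      · exact absurd h (Fin.castSucc_lt_last x).ne
      · exact (Fin.castSucc_injective m hzx) ▸ hz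
    · exact absurd hy'.symm (Fin.castSucc_lt_last y'.1).ne.symm
  · intro hx
    exact Or.inl ⟨Or.inr ⟨x, hx, rfl⟩, Or.inl rfl⟩

noncomputable def fiberEquiv (s : Finset (Fin m)) :
    {R : Setoid (Fin (m+1)) // sOf R = s} ≃ Setoid {x : Fin m // x ∉ s} where
  toFun R := Setoid.comap (fun x : {x : Fin m // x ∉ s} => x.1.castSucc) R.1
  invFun Q := ⟨extRel s Q, sOf_extRel s Q⟩
  left_inv := by
    rintro ⟨R, hR⟩
    subst hR
    refine Subtype.ext (Setoid.ext fun a b => ?_)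
    rw [extRel_iff]
    constructor
    · rintro (⟨ha, hb⟩ | ⟨x, y, hxa, hyb, hq⟩)
      · rw [inS_sOf_iff] at ha hb
        exact R.trans ha (R.symm hb)
      · rw [Setoid.comap_rel] at hq
        rwa [hxa, hyb] at hq
    · intro hab
      by_cases ha : R a (Fin.last m)
      · exact Or.inl ⟨inS_sOf_iff.2 ha, inS_sOf_iff.2 (R.trans (R.symm hab) ha)⟩
      · rcases inS_or (s := sOf R) a with h' | ⟨x, hx, hxa⟩
        · exact absurd (inS_sOf_iff.1 h') ha
        · rcases inS_or (s := sOf R) b with h'' | ⟨y, hy, hyb⟩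
          · exact absurd (R.trans hab (inS_sOf_iff.1 h'')) ha
          · refine Or.inr ⟨⟨x, hx⟩, ⟨y, hy⟩, hxa, hyb, ?_⟩
            rw [Setoid.comap_rel]
            simp only
            rwa [hxa, hyb]
  right_inv := by
    intro Q
    refine Setoid.ext fun x y => ?_
    rw [Setoid.comap_rel, extRel_iff]
    constructor
    · rintro (⟨hx, _⟩ | ⟨x', y', hx', hy', hq⟩)
      · exact absurd hx (not_inS x.2)
      · have hxx : x' = x := Subtype.ext (Fin.castSucc_injective m hx')
        have hyy : y' = y := Subtype.ext (Fin.castSucc_injective m hy')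
        rwa [hxx, hyy] at hq
    · intro h
      exact Or.inr ⟨x, y, rfl, rfl, h⟩

end BellRec

def setoidCongr {α β : Type*} (e : α ≃ β) : Setoid α ≃ Setoid β where
  toFun R := Setoid.comap e.symm R
  invFun Q := Setoid.comap e Q
  left_inv R := Setoid.ext fun a b => by simp [Setoid.comap_rel]
  right_inv Q := Setoid.ext fun a b => by simp [Setoid.comap_rel]

lemma bell_card_eq {α : Type*} [Fintype α] {k : ℕ} (h : Fintype.card α = k) :
    Nat.card (Setoid α) = bell k :=
  Nat.card_congr (setoidCongr (Fintype.equivFinOfCardEq h))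

lemma bell_rec (m : ℕ) :
    (bell (m+1) : ℤ) = ∑ j ∈ Finset.range (m+1), (m.choose j) * (bell j : ℤ) := by
  have e1 : Setoid (Fin (m+1)) ≃ Σ s : Finset (Fin m), Setoid {x : Fin m // x ∉ s} :=
    (Equiv.sigmaFiberEquiv sOf).symm.trans (Equiv.sigmaCongrRight fiberEquiv)
  have e2 : ∀ s : Finset (Fin m), Nat.card (Setoid {x : Fin m // x ∉ s}) = bell (m - s.card) := by
    intro s
    refine bell_card_eq ?_
    rw [Fintype.card_subtype_compl, Fintype.card_fin, Fintype.card_coe]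
  have h1 : bell (m+1) = ∑ s : Finset (Fin m), bell (m - s.card) := by
    rw [bell, Nat.card_congr e1]
    haveI : ∀ s : Finset (Fin m), Fintype (Setoid {x : Fin m // x ∉ s}) :=
      fun s => Fintype.ofFinite _
    rw [Nat.card_eq_fintype_card, Fintype.card_sigma]
    refine Finset.sum_congr rfl fun s _ => ?_
    rw [← Nat.card_eq_fintype_card, e2 s]
  have h2 : ∑ s : Finset (Fin m), bell (m - s.card)
      = ∑ j ∈ Finset.range (m+1), (m.choose j) * bell (m - j) := by
    rw [← Finset.powerset_univ, Finset.sum_powerset]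
    rw [Finset.card_univ, Fintype.card_fin]
    refine Finset.sum_congr rfl fun j hj => ?_
    rw [Finset.sum_congr rfl (fun t ht => by
      rw [(Finset.mem_powersetCard.1 ht).2]), Finset.sum_const,
      Finset.card_powersetCard, Finset.card_univ, Fintype.card_fin, smul_eq_mul]
  have h3 : ∑ j ∈ Finset.range (m+1), (m.choose j) * bell (m - j)
      = ∑ j ∈ Finset.range (m+1), (m.choose j) * bell j := by
    rw [← Finset.sum_range_reflect]
    refine Finset.sum_congr rfl fun j hj => ?_
    rw [Finset.mem_range] at hj
    have e : m + 1 - 1 - j = m - j := by omega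
    rw [e, Nat.sub_sub_self (by omega), Nat.choose_symm (by omega)]
  rw [h1, h2, h3]
  push_cast
  ring

end Bell

section Perm
variable {t : ℕ}

/-- insert the value `k` at the last position of (the monotone relabeling of) `τ` -/
def addLast (k : Fin (t+2)) (τ : Perm (Fin (t+1))) : Perm (Fin (t+2)) :=
  (finSuccEquiv' (Fin.last (t+1))).trans (τ.optionCongr.trans (finSuccEquiv' k).symm)

lemma addLast_last (k : Fin (t+2)) (τ : Perm (Fin (t+1))) :
    addLast k τ (Fin.last (t+1)) = k := by
  simp [addLast, finSuccEquiv'_at, finSuccEquiv'_symm_none]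

lemma addLast_castSucc (k : Fin (t+2)) (τ : Perm (Fin (t+1))) (j : Fin (t+1)) :
    addLast k τ j.castSucc = k.succAbove (τ j) := by
  have h : finSuccEquiv' (Fin.last (t+1)) j.castSucc = some j := by
    rw [← Fin.succAbove_last, finSuccEquiv'_succAbove]
  simp [addLast, h, finSuccEquiv'_symm_some]

/-- delete the last entry of `π` (with monotone relabeling) -/
def delLast (k : Fin (t+2)) (π : {π : Perm (Fin (t+2)) // π (Fin.last (t+1)) = k}) :
    Perm (Fin (t+1)) :=
  Equiv.removeNone ((finSuccEquiv' (Fin.last (t+1))).symm.trans (π.1.trans (finSuccEquiv' k)))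

lemma delLast_spec (k : Fin (t+2)) (π : {π : Perm (Fin (t+2)) // π (Fin.last (t+1)) = k})
    (j : Fin (t+1)) : π.1 j.castSucc = k.succAbove (delLast k π j) := by
  set e := (finSuccEquiv' (Fin.last (t+1))).symm.trans (π.1.trans (finSuccEquiv' k)) with he
  have hnone : e none = none := by
    simp [he, finSuccEquiv'_symm_none, π.2, finSuccEquiv'_at]
  have hsome : ∃ x', e (some j) = some x' := by
    rcases h : e (some j) with _ | x'
    · exact absurd (e.injective (h.trans hnone.symm)) (by simp)
    · exact ⟨x', rfl⟩
  have := Equiv.removeNone_some e hsome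
  have he2 : e (some j) = finSuccEquiv' k (π.1 j.castSucc) := by
    simp [he, finSuccEquiv'_symm_some, Fin.succAbove_last]
  rw [he2] at this
  have : (finSuccEquiv' k).symm (some (e.removeNone j)) = π.1 j.castSucc := by
    rw [this]; simp
  rw [finSuccEquiv'_symm_some] at this
  rw [← this]
  rfl

/-- the equivalence between permutations of `Fin (t+2)` with last value `k`
and permutations of `Fin (t+1)` -/
def lastEquiv (k : Fin (t+2)) :
    {π : Perm (Fin (t+2)) // π (Fin.last (t+1)) = k} ≃ Perm (Fin (t+1)) where
  toFun := delLast k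
  invFun τ := ⟨addLast k τ, addLast_last k τ⟩
  left_inv π := by
    refine Subtype.ext (Equiv.ext fun a => ?_)
    induction a using Fin.lastCases with
    | last => rw [addLast_last, π.2]
    | cast j => rw [addLast_castSucc, ← delLast_spec]
  right_inv τ := by
    refine Equiv.ext fun j => ?_
    have h1 := delLast_spec k ⟨addLast k τ, addLast_last k τ⟩ j
    rw [addLast_castSucc] at h1
    exact (Fin.succAbove_right_injective h1).symm

lemma lastEquiv_spec (k : Fin (t+2)) (π : {π : Perm (Fin (t+2)) // π (Fin.last (t+1)) = k})
    (j : Fin (t+1)) : π.1 j.castSucc = k.succAbove (lastEquiv k π j) :=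
  delLast_spec k π j

lemma val_succAbove (k : Fin (t+2)) (x : Fin (t+1)) :
    ((k.succAbove x : Fin (t+2)) : ℕ) = if (x:ℕ) < (k:ℕ) then (x:ℕ) else (x:ℕ)+1 := by
  rcases lt_or_ge (x.castSucc) k with h | h
  · rw [Fin.succAbove_of_castSucc_lt _ _ h, if_pos (by exact_mod_cast h)]
    rfl
  · rw [Fin.succAbove_of_le_castSucc _ _ h, if_neg (by
      simp only [not_lt]
      exact_mod_cast h)]
    rfl

lemma succAbove_lt_self_iff (k : Fin (t+2)) (x : Fin (t+1)) :
    k.succAbove x < k ↔ (x:ℕ) < (k:ℕ) := by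
  rw [Fin.lt_iff_val_lt_val, val_succAbove]
  split <;> omega

lemma self_lt_succAbove_iff (k : Fin (t+2)) (x : Fin (t+1)) :
    k < k.succAbove x ↔ (k:ℕ) ≤ (x:ℕ) := by
  rw [Fin.lt_iff_val_lt_val, val_succAbove]
  split <;> omega

lemma avoids_transfer (k : Fin (t+2)) (π : {π : Perm (Fin (t+2)) // π (Fin.last (t+1)) = k}) :
    Avoids3d12 π.1 ↔ (Avoids3d12 (lastEquiv k π) ∧
      ((k:ℕ) ≤ ((lastEquiv k π) (Fin.last t) : ℕ) ∨ (k:ℕ) = t+1)) := by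
  set τ := lastEquiv k π with hτ
  have hv : ∀ a : Fin (t+1), π.1 a.castSucc = k.succAbove (τ a) := fun a => lastEquiv_spec k π a
  have hkle : (k:ℕ) ≤ t+1 := by have := k.isLt; omega
  have main : (∃ (i j : Fin (t+2)) (h : j.1 + 1 < t+2),
        i < j ∧ π.1 j < π.1 ⟨j.1 + 1, h⟩ ∧ π.1 ⟨j.1 + 1, h⟩ < π.1 i)
      ↔ ((∃ (i' j' : Fin (t+1)) (h' : j'.1 + 1 < t+1),
        i' < j' ∧ τ j' < τ ⟨j'.1 + 1, h'⟩ ∧ τ ⟨j'.1 + 1, h'⟩ < τ i')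
        ∨ ((τ (Fin.last t) : ℕ) < (k:ℕ) ∧ (k:ℕ) ≤ t)) := by
    have hval : ∀ (a : Fin (t+2)) (a' : Fin (t+1)), a = a'.castSucc →
        π.1 a = k.succAbove (τ a') := by
      rintro a a' rfl
      exact hv a'
    constructor
    · rintro ⟨i, j, h, hij, h1, h2⟩
      have hijv : i.1 < j.1 := hij
      rcases lt_or_eq_of_le (by omega : j.1 + 1 ≤ t + 1) with hlt | heq
      · left
        rw [hval j ⟨j.1, by omega⟩ (Fin.ext (by simp)),
            hval ⟨j.1+1, h⟩ ⟨j.1+1, hlt⟩ (Fin.ext (by simp))] at h1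
        rw [hval i ⟨i.1, by omega⟩ (Fin.ext (by simp)),
            hval ⟨j.1+1, h⟩ ⟨j.1+1, hlt⟩ (Fin.ext (by simp))] at h2
        exact ⟨⟨i.1, by omega⟩, ⟨j.1, by omega⟩, (by first | (simp; omega) | simp),
          Fin.mk_lt_mk.2 hijv,
          Fin.succAbove_lt_succAbove_iff.1 h1,
          Fin.succAbove_lt_succAbove_iff.1 h2⟩
      · right
        have ej1 : (⟨j.1 + 1, h⟩ : Fin (t+2)) = Fin.last (t+1) := Fin.ext (by first | (simp; omega) | simp)
        rw [ej1, π.2] at h1 h2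
        rw [hval j (Fin.last t) (Fin.ext (by first | (simp; omega) | simp))] at h1
        rw [hval i ⟨i.1, by omega⟩ (Fin.ext (by simp))] at h2
        have hb1 : (τ (Fin.last t) : ℕ) < (k:ℕ) := (succAbove_lt_self_iff k _).1 h1
        have hile := (self_lt_succAbove_iff k _).1 h2
        have hlt2 := (τ ⟨i.1, by omega⟩).isLt
        exact ⟨hb1, by omega⟩
    · rintro (⟨i', j', h', hij, h1, h2⟩ | ⟨hb1, hb2⟩)
      · refine ⟨Fin.castSucc i', Fin.castSucc j', (by first | (simp; omega) | simp),
          (by rw [Fin.lt_iff_val_lt_val] at hij ⊢; simpa using hij), ?_, ?_⟩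
        · rw [hval (Fin.castSucc j') j' rfl,
            hval ⟨(Fin.castSucc j').1 + 1, by first | (simp; omega) | simp⟩ ⟨j'.1 + 1, h'⟩ (Fin.ext (by simp))]
          exact Fin.succAbove_lt_succAbove_iff.2 h1
        · rw [hval (Fin.castSucc i') i' rfl,
            hval ⟨(Fin.castSucc j').1 + 1, by first | (simp; omega) | simp⟩ ⟨j'.1 + 1, h'⟩ (Fin.ext (by simp))]
          exact Fin.succAbove_lt_succAbove_iff.2 h2
      · set i' : Fin (t+1) := τ.symm ⟨t, by omega⟩ with hi'
        have hτi' : τ i' = ⟨t, by omega⟩ := by rw [hi']; simp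
        have hi'lt : i'.1 < t := by
          by_contra hcon
          have : i' = Fin.last t := Fin.ext (by
            have := i'.isLt
            simp only [Fin.val_last]
            omega)
          rw [this] at hτi'
          rw [hτi'] at hb1
          simp at hb1
          omega
        refine ⟨Fin.castSucc i', Fin.castSucc (Fin.last t), (by simp),
          (by rw [Fin.lt_iff_val_lt_val]; simpa using hi'lt), ?_, ?_⟩
        · have ej1 : (⟨(Fin.castSucc (Fin.last t)).1 + 1, by simp⟩ : Fin (t+2))
              = Fin.last (t+1) := Fin.ext (by simp)
          rw [ej1, π.2, hval (Fin.castSucc (Fin.last t)) (Fin.last t) rfl]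
          exact (succAbove_lt_self_iff k _).2 hb1
        · have ej1 : (⟨(Fin.castSucc (Fin.last t)).1 + 1, by simp⟩ : Fin (t+2))
              = Fin.last (t+1) := Fin.ext (by simp)
          rw [ej1, π.2, hval (Fin.castSucc i') i' rfl]
          refine (self_lt_succAbove_iff k _).2 ?_
          rw [hτi']
          exact hb2
  rw [Avoids3d12, Avoids3d12, main]
  have hτlt := (τ (Fin.last t)).isLt
  constructor
  · intro hn
    refine ⟨fun hc => hn (Or.inl hc), ?_⟩
    rcases Nat.lt_or_ge ((τ (Fin.last t) : ℕ)) ((k:ℕ)) with hlt | hge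
    · right
      by_contra hk
      exact hn (Or.inr ⟨hlt, by omega⟩)
    · exact Or.inl hge
  · rintro ⟨hA, hB⟩ (hc | ⟨hc1, hc2⟩)
    · exact hA hc
    · rcases hB with hB | hB <;> omega

end Perm

section Count
open Equiv

noncomputable def cntVal (m j : ℕ) : ℕ :=
  Nat.card {π : Perm (Fin (m+1)) // Avoids3d12 π ∧ (π (Fin.last m) : ℕ) = j}

noncomputable def cntGe (m c : ℕ) : ℕ :=
  Nat.card {π : Perm (Fin (m+1)) // Avoids3d12 π ∧ c ≤ (π (Fin.last m) : ℕ)}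

lemma cntGe_top (m : ℕ) : cntGe m (m+1) = 0 := by
  rw [cntGe]
  have : IsEmpty {π : Perm (Fin (m+1)) // Avoids3d12 π ∧ m+1 ≤ (π (Fin.last m) : ℕ)} := by
    constructor
    rintro ⟨π, _, h⟩
    exact absurd (π (Fin.last m)).isLt (by omega)
  exact Nat.card_of_isEmpty

lemma cntGe_split (m c : ℕ) : cntGe m c = cntVal m c + cntGe m (c+1) := by
  classical
  rw [cntGe, cntVal, cntGe, Nat.card_eq_fintype_card, Nat.card_eq_fintype_card,
    Nat.card_eq_fintype_card, Fintype.card_subtype, Fintype.card_subtype, Fintype.card_subtype]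
  rw [← Finset.card_union_of_disjoint (by
    rw [Finset.disjoint_filter]
    rintro π _ ⟨_, h1⟩ ⟨_, h2⟩
    omega)]
  congr 1
  rw [← Finset.filter_or]
  refine Finset.filter_congr fun π _ => ?_
  constructor
  · rintro ⟨hA, h⟩
    rcases eq_or_lt_of_le h with h' | h'
    · exact Or.inl ⟨hA, h'.symm⟩
    · exact Or.inr ⟨hA, h'⟩
  · rintro (⟨hA, h⟩ | ⟨hA, h⟩) <;> exact ⟨hA, by omega⟩

lemma cntGe_sum (m : ℕ) : ∀ d c, c + d = m + 1 → cntGe m c = ∑ j ∈ Ico c (m+1), cntVal m j := by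
  intro d
  induction d with
  | zero =>
    intro c hc
    have : c = m + 1 := by omega
    subst this
    simp [cntGe_top]
  | succ d ih =>
    intro c hc
    rw [cntGe_split, ih (c+1) (by omega),
      Finset.sum_eq_sum_Ico_succ_bot (by omega : c < m+1)]

lemma master (t : ℕ) (k : Fin (t+2)) :
    Nat.card {π : Perm (Fin (t+2)) // Avoids3d12 π ∧ π (Fin.last (t+1)) = k}
      = Nat.card {τ : Perm (Fin (t+1)) // Avoids3d12 τ ∧
          ((k:ℕ) ≤ (τ (Fin.last t) : ℕ) ∨ (k:ℕ) = t+1)} := by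
  refine Nat.card_congr (Equiv.trans ?_ ((lastEquiv k).subtypeEquiv fun π => avoids_transfer k π))
  exact (Equiv.subtypeEquivRight fun π => and_comm).trans
    (Equiv.subtypeSubtypeEquivSubtypeInter (fun π : Perm (Fin (t+2)) => π (Fin.last (t+1)) = k)
      Avoids3d12).symm

lemma cntVal_succ (t : ℕ) (j : ℕ) (hj : j ≤ t+1) :
    cntVal (t+1) j = cntGe t (if j = t+1 then 0 else j) := by
  have e0 : cntVal (t+1) j
      = Nat.card {π : Perm (Fin (t+2)) // Avoids3d12 π ∧ π (Fin.last (t+1)) = ⟨j, by omega⟩} := by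
    rw [cntVal]
    refine Nat.card_congr (Equiv.subtypeEquivRight fun π => ?_)
    simp [Fin.ext_iff]
  rw [e0, master t ⟨j, by omega⟩, cntGe]
  refine Nat.card_congr (Equiv.subtypeEquivRight fun τ => ?_)
  have hvlt := (τ (Fin.last t)).isLt
  by_cases h : j = t+1
  · rw [if_pos h]
    constructor
    · rintro ⟨hA, _⟩; exact ⟨hA, Nat.zero_le _⟩
    · rintro ⟨hA, _⟩; exact ⟨hA, Or.inr (by simpa using h)⟩
  · rw [if_neg h]
    constructor
    · rintro ⟨hA, hc | hc⟩
      · exact ⟨hA, by simpa using hc⟩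
      · exact absurd (by simpa using hc) h
    · rintro ⟨hA, hc⟩
      exact ⟨hA, Or.inl (by simpa using hc)⟩

end Count

section Main

noncomputable def bellZ : ℕ → ℤ := fun c => (bell c : ℤ)

lemma cntVal_base : cntVal 0 0 = 1 := by
  have hss : Subsingleton (Fin (0+1)) := ⟨fun a b => Fin.ext (by omega)⟩
  rw [cntVal]
  refine Nat.card_eq_one_iff_unique.2 ⟨?_, ?_⟩
  · constructor
    intro a b
    refine Subtype.ext (Equiv.ext fun x => ?_)
    exact Subsingleton.elim _ _
  · refine ⟨1, ?_, ?_⟩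
    · rintro ⟨i, j, h, _⟩
      omega
    · have := ((1 : Equiv.Perm (Fin (0+1))) (Fin.last 0)).isLt
      omega

lemma main_count : ∀ m : ℕ, ((cntVal m m : ℤ) = bellZ m) ∧
    ∀ j < m, (cntVal m j : ℤ) = nabla bellZ j m := by
  intro m
  induction m with
  | zero =>
    refine ⟨?_, fun j hj => absurd hj (by omega)⟩
    rw [cntVal_base, bellZ, bell_subsingleton (by omega)]
  | succ m ih =>
    have hsum : ∀ c ≤ m, (cntGe m c : ℤ) = nabla bellZ c (m+1) := by
      intro c hc
      rw [cntGe_sum m (m+1-c) c (by omega)]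
      push_cast
      rw [Finset.sum_Ico_succ_top (by omega : c ≤ m)]
      have e1 : ∀ j ∈ Ico c m, ((cntVal m j : ℤ)) = nabla bellZ j m := by
        intro j hj
        rw [Finset.mem_Ico] at hj
        exact ih.2 j hj.2
      rw [Finset.sum_congr rfl e1, ih.1,
        nabla_sum bellZ (fun m' => by rw [bellZ, bell_rec m']; rfl) m (m - c) c rfl hc]
      omega
    constructor
    · rw [cntVal_succ m (m+1) (le_refl _), if_pos rfl, hsum 0 (by omega), nabla_zero]
    · intro j hj
      rw [cntVal_succ m j (by omega), if_neg (by omega), hsum j (by omega)]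

end Main

theorem bell_distribution (n : ℕ) (hn : 2 ≤ n) :
    Nat.card {π : Equiv.Perm (Fin n) // Avoids3d12 π ∧ π ⟨n - 1, by omega⟩ = ⟨n - 1, by omega⟩} = bell (n - 1) ∧
    ∀ k : ℕ, (hk1 : 1 ≤ k) → (hk2 : k ≤ n - 1) →
      (Nat.card {π : Equiv.Perm (Fin n) // Avoids3d12 π ∧ π ⟨n - 1, by omega⟩ = ⟨k - 1, by omega⟩} : ℤ) =
        ∑ i ∈ Finset.range (k), (-1 : ℤ) ^ i * (((k - 1)).choose i) * (bell (n - 1 - i) : ℤ) := by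
  obtain ⟨m, rfl⟩ : ∃ m, n = m + 1 := ⟨n - 1, by omega⟩
  have hm : 1 ≤ m := by omega
  have elast : (⟨m + 1 - 1, by omega⟩ : Fin (m+1)) = Fin.last m := Fin.ext (by simp)
  constructor
  · have e0 : Nat.card {π : Equiv.Perm (Fin (m+1)) // Avoids3d12 π ∧
        π ⟨m + 1 - 1, by omega⟩ = ⟨m + 1 - 1, by omega⟩} = cntVal m m := by
      rw [cntVal]
      refine Nat.card_congr (Equiv.subtypeEquivRight fun π => ?_)
      rw [elast]
      simp [Fin.ext_iff]
    have h1 := (main_count m).1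
    rw [bellZ] at h1
    have e1 : m + 1 - 1 = m := by omega
    rw [e0, e1]
    exact_mod_cast h1
  · intro k hk1 hk2
    have hkm : k - 1 < m := by omega
    have e0 : Nat.card {π : Equiv.Perm (Fin (m+1)) // Avoids3d12 π ∧
        π ⟨m + 1 - 1, by omega⟩ = ⟨k - 1, by omega⟩} = cntVal m (k-1) := by
      rw [cntVal]
      refine Nat.card_congr (Equiv.subtypeEquivRight fun π => ?_)
      rw [elast]
      simp [Fin.ext_iff]
    rw [e0, (main_count m).2 (k-1) hkm, nabla]
    have ek : k - 1 + 1 = k := by omega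
    rw [ek]
    refine Finset.sum_congr rfl fun i hi => ?_
    have e2 : m - i = m + 1 - 1 - i := by omega
    rw [e2, bellZ]
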